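/- arXiv:0704.1624 — 3 statements merged into one kernel-verified Lean document; each statement's English description precedes it below -/
import Mathlib

section
/- Let G be a small groupoid and n a natural number. The evaluation-at-0 functor ComposableArrows G n → G, sending a chain x₀ → x₁ → ⋯ → xₙ of n composable morphisms to its first object x₀ (and a natural transformation to its component at 0), is an equivalence of categories. -/
open CategoryTheory

/-- For a groupoid `G`, the equivalence between `ComposableArrows G n` and `G`
given by evaluation at `0` and the constant functor. -/
noncomputable def evalZeroEquiv (G : Type) [Groupoid.{0} G] (n : ℕ) :
    ComposableArrows G n ≌ G where
  functor := (evaluation (Fin (n + 1)) G).obj 0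
  inverse := Functor.const (Fin (n + 1))
  unitIso := NatIso.ofComponents
    (fun F => NatIso.ofComponents
      (fun i => (asIso (F.map (homOfLE i.zero_le))).symm)
      (by
        intro i j f
        simp only [asIso, Iso.symm_mk, Functor.comp_obj, Functor.const_obj_obj,
          Functor.const_obj_map, Category.comp_id]
        rw [IsIso.comp_inv_eq, IsIso.eq_inv_comp]
        show F.map _ ≫ F.map _ = _
        rw [← F.map_comp]
        rfl))
    (by
      intro F F' η
      ext i
      simp only [NatTrans.comp_app, NatIso.ofComponents_hom_app, Iso.symm_hom, asIso_inv,
        Functor.comp_obj, Functor.const_obj_obj, Functor.id_map, Functor.comp_map]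
      rw [IsIso.comp_inv_eq]
      simp [η.naturality])
  counitIso := Iso.refl _

/-- For a small groupoid `G` and `n : ℕ`, the evaluation-at-`0` functor
`ComposableArrows G n ⥤ G`, sending a chain `x₀ → x₁ → ⋯ → xₙ` of `n` composable morphisms
to its first object `x₀` (and a natural transformation to its component at `0`),
is an equivalence of categories. -/
theorem stmt0 (G : Type) [Groupoid.{0} G] (n : ℕ) :
    ((evaluation (Fin (n + 1)) G).obj 0 : ComposableArrows G n ⥤ G).IsEquivalence := by
  exact (evalZeroEquiv G n).isEquivalence_functor
end

section
/- Let C be a small category, n ≥ 1, and let x₀, …, xₙ be objects of C. Let p : Core(ComposableArrows C n) → ∏_{i : Fin (n+1)} Core C be the functor sending a chain to its tuple of objects. The fiber of nerve(p) over the vertex (x₀, …, xₙ) — that is, the pullback of nerve(p) along the map Δ[0] → nerve(∏_{i : Fin (n+1)} Core C) classifying the 0-simplex (x₀, …, xₙ) — is isomorphic to the constant (discrete) simplicial set on the set Hom(x₀,x₁) × Hom(x₁,x₂) × ⋯ × Hom(x_{n-1},xₙ). -/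
open CategoryTheory Simplicial

/-- The functor `Core C ⥤ Core D` induced by a functor `C ⥤ D`. -/
def coreMap {C : Type*} [Category C] {D : Type*} [Category D] (F : C ⥤ D) :
    Core C ⥤ Core D :=
  Core.functorToCore (Core.inclusion _ ⋙ F)

/-- The map of nerves induced by a functor. -/
def nerveMap {C : Type} [Category.{0} C] {D : Type} [Category.{0} D] (F : C ⥤ D) :
    nerve C ⟶ nerve D :=
  nerveFunctor.map (X := Cat.of C) (Y := Cat.of D) F.toCatHom

/-- The functor `Core (ComposableArrows C n) ⥤ ∏_{i : Fin (n+1)} Core C` sending a chain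
`x₀ → x₁ → ⋯ → xₙ` to its tuple of objects `(x₀, x₁, …, xₙ)`. -/
def chainToObjects (C : Type) [SmallCategory C] (n : ℕ) :
    Core (ComposableArrows C n) ⥤ (Fin (n + 1) → Core C) :=
  Functor.pi' (fun i => coreMap ((evaluation (Fin (n + 1)) C).obj i))

/-- The map `Δ[0] ⟶ X` classifying a `0`-simplex `x` of a simplicial set `X`. -/
def classifyingMap (X : SSet.{0}) (x : X _⦋0⦌) : Δ[0] ⟶ X :=
  (SSet.yonedaEquiv (X := X) (n := _)).symm x

namespace Stmt7Aux

open Limits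

variable {C : Type} [SmallCategory C] {n : ℕ} (x : Fin (n + 1) → C)

/-- The base point, as an object of the pi category of cores. -/
def pt : Fin (n + 1) → Core C := fun i => Core.mk (x i)

lemma core_eqToHom_hom {D : Type*} [Category D] {a b : Core D} (h : a = b) :
    (eqToHom h : a ⟶ b).iso.hom = eqToHom (congrArg (Core.inclusion D).obj h) := by
  subst h; rfl

/-- Extract the successive maps of a composable-arrows chain whose objects are `x`. -/
def extract (F : ComposableArrows C n) (h : ∀ i : Fin (n + 1), F.obj i = x i) :
    ∀ i : Fin n, (x i.castSucc ⟶ x i.succ) :=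
  fun i => eqToHom (h i.castSucc).symm ≫ F.map (homOfLE i.castSucc_le_succ) ≫ eqToHom (h i.succ)

lemma extract_congr {F F' : ComposableArrows C n} (e : F = F')
    (h : ∀ i : Fin (n + 1), F.obj i = x i) (h' : ∀ i : Fin (n + 1), F'.obj i = x i) :
    extract x F h = extract x F' h' := by
  subst e; rfl

noncomputable def Fmk (g : ∀ i : Fin n, (x i.castSucc ⟶ x i.succ)) : ComposableArrows C n :=
  ComposableArrows.mkOfObjOfMapSucc x g

lemma extract_Fmk (g : ∀ i : Fin n, (x i.castSucc ⟶ x i.succ)) :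
    extract x (Fmk x g) (fun _ => rfl) = g := by
  funext i
  simp only [extract, eqToHom_refl, Category.comp_id, Category.id_comp]
  have := ComposableArrows.mkOfObjOfMapSucc_map_succ x g i.1 i.2
  exact (Category.id_comp _).trans ((Category.comp_id _).trans
    (by simpa [Fmk, ComposableArrows.map'] using this))

lemma Fmk_extract (F : ComposableArrows C n) (h : ∀ i : Fin (n + 1), F.obj i = x i) :
    Fmk x (extract x F h) = F := by
  refine ComposableArrows.ext (fun i => (h i).symm) ?_
  intro i hi
  rw [show (Fmk x (extract x F h)).map' i (i + 1) = extract x F h ⟨i, hi⟩ from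
    ComposableArrows.mkOfObjOfMapSucc_map_succ x _ i hi]
  simp [extract, ComposableArrows.map']
  rfl

variable {m : ℕ}

/-- The key constancy lemma. -/
lemma constancy (σ : ComposableArrows (Core (ComposableArrows C n)) m)
    (hσ : σ ⋙ chainToObjects C n = (Functor.const (Fin (m + 1))).obj (pt x)) :
    (∀ (j : Fin (m + 1)) (i : Fin (n + 1)), (σ.obj j).of.obj i = x i) ∧
      σ = (Functor.const (Fin (m + 1))).obj (σ.obj 0) := by
  have hobj : ∀ (j : Fin (m + 1)) (i : Fin (n + 1)),
      (σ.obj j).of.obj i = x i := by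
    intro j i
    exact congrArg Core.of (congrFun (Functor.congr_obj hσ j) i)
  refine ⟨hobj, ?_⟩
  have hcomp : ∀ {j j' : Fin (m + 1)} (f : j ⟶ j') (i : Fin (n + 1)),
      ((σ.map f).iso.hom).app i = eqToHom ((hobj j i).trans (hobj j' i).symm) := by
    intro j j' f i
    have h1 := Functor.congr_hom hσ f
    have h2 := congrFun h1 i
    simp only [Pi.comp_apply, Functor.eqToHom_proj, Pi.id_apply] at h2
    have h3 := congrArg (fun f => f.iso.hom) h2
    simp only [coreCategory_comp_iso, Iso.trans_hom, core_eqToHom_hom] at h3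
    refine h3.trans ?_
    refine (congrArg (eqToHom _ ≫ ·) (Category.id_comp (eqToHom _))).trans ?_
    exact eqToHom_trans _ _
  have objeq : ∀ {j j' : Fin (m + 1)} (f : j ⟶ j'),
      (σ.obj j).of = (σ.obj j').of := by
    intro j j' f
    refine ComposableArrows.ext (fun i => (hobj j i).trans (hobj j' i).symm) ?_
    intro i hi
    have nat := (σ.map f).iso.hom.naturality
      (homOfLE (by exact Fin.mk_le_mk.2 (by omega)) :
        (⟨i, by omega⟩ : Fin (n + 1)) ⟶ ⟨i + 1, by omega⟩)
    rw [hcomp, hcomp] at nat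
    rw [ComposableArrows.map', ComposableArrows.map', ← Category.assoc, ← nat,
      Category.assoc, eqToHom_trans, eqToHom_refl, Category.comp_id]
  have mapeq : ∀ {j j' : Fin (m + 1)} (f : j ⟶ j'),
      σ.map f = eqToHom (congrArg Core.mk (objeq f) : σ.obj j = σ.obj j') := by
    intro j j' f
    apply (Core.inclusion (ComposableArrows C n)).map_injective
    rw [eqToHom_map]
    show (σ.map f).iso.hom = _
    ext i
    rw [hcomp, eqToHom_app]
    rfl
  refine CategoryTheory.Functor.ext (fun j => (congrArg Core.mk (objeq (homOfLE (Fin.zero_le j))) : σ.obj 0 = σ.obj j).symm) ?_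
  intro j j' f
  rw [mapeq f]
  simp

/-- Composition with a constant functor, strictly. -/
lemma const_comp_eq {J : Type*} [Category J] {D : Type*} [Category D]
    {E : Type*} [Category E] (X : D) (F : D ⥤ E) :
    (Functor.const J).obj X ⋙ F = (Functor.const J).obj (F.obj X) :=
  CategoryTheory.Functor.ext (fun _ => rfl) (fun _ _ _ => by simp)

/-- The fiber, i.e. the constant simplicial set on the set of chains from `x₀` to `xₙ`. -/
noncomputable abbrev K : SSet.{0} :=
  (Functor.const SimplexCategoryᵒᵖ).obj (∀ i : Fin n, (x i.castSucc ⟶ x i.succ))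

/-- First leg of the cone. -/
noncomputable def legA : K x ⟶ nerve (Core (ComposableArrows C n)) where
  app m := ↾fun g => (Functor.const (Fin (m.unop.len + 1))).obj (Core.mk (Fmk x g : ComposableArrows C n))
  naturality m m' α := rfl

instance (m : SimplexCategoryᵒᵖ) : Subsingleton (Δ[0].obj m) :=
  ⟨fun a b => by
    obtain ⟨a⟩ := a
    obtain ⟨b⟩ := b
    exact congrArg ULift.up
      (Subsingleton.elim (α := (m.unop ⟶ SimplexCategory.mk 0)) a b)⟩

/-- Second leg of the cone. -/
noncomputable def legB : K x ⟶ Δ[0] where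
  app m := ↾fun _ => ULift.up (SimplexCategory.Hom.mk (OrderHom.const _ 0))
  naturality m m' α := by
    ext g
    apply Subsingleton.elim

lemma cone_condition :
    legA x ≫ _root_.nerveMap (chainToObjects C n)
      = legB x ≫ classifyingMap (nerve (Fin (n + 1) → Core C))
          (ComposableArrows.mk₀ (pt x)) := by
  ext m g
  show (Functor.const (Fin (m.unop.len + 1))).obj
      (Core.mk (Fmk x g)) ⋙ chainToObjects C n
    = (Functor.const (Fin (m.unop.len + 1))).obj (pt x)
  rw [const_comp_eq]
  rfl

section

variable (s : PullbackCone (_root_.nerveMap (chainToObjects C n))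
  (classifyingMap (nerve (Fin (n + 1) → Core C)) (ComposableArrows.mk₀ (pt x))))

lemma cone_fiber (m : SimplexCategoryᵒᵖ) (y : s.pt.obj m) :
    (s.fst.app m y : ComposableArrows (Core (ComposableArrows C n)) m.unop.len)
        ⋙ chainToObjects C n
      = (Functor.const (Fin (m.unop.len + 1))).obj (pt x) :=
  types_congr_hom (NatTrans.congr_app s.condition m) y

/-- The lift of a pullback cone to the fiber. -/
noncomputable def coneLift : s.pt ⟶ K x where
  app m := ↾fun y => extract x ((s.fst.app m y).obj 0).of
    (fun i => (constancy x _ (cone_fiber x s m y)).1 0 i)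
  naturality m m' α := by
    ext y
    have e1 : s.fst.app m' (s.pt.map α y) = (nerve _).map α (s.fst.app m y) :=
      types_congr_hom (s.fst.naturality α) y
    have e2 : ((s.fst.app m' (s.pt.map α y)
          : ComposableArrows (Core (ComposableArrows C n)) m'.unop.len)).obj 0
        = (s.fst.app m y).obj 0 := by
      rw [e1]
      exact Functor.congr_obj (constancy x _ (cone_fiber x s m y)).2 _
    exact extract_congr x (congrArg Core.of e2)
      (fun i => (constancy x _ (cone_fiber x s m' (s.pt.map α y))).1 0 i)
      (fun i => (constancy x _ (cone_fiber x s m y)).1 0 i)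

lemma coneLift_fac_left : coneLift x s ≫ legA x = s.fst := by
  ext m y
  refine Eq.trans ?_ ((constancy x _ (cone_fiber x s m y)).2).symm
  exact congrArg (Functor.const (Fin (m.unop.len + 1))).obj
    (congrArg Core.mk (Fmk_extract x ((s.fst.app m y).obj 0).of
      (fun i => (constancy x _ (cone_fiber x s m y)).1 0 i)))

lemma coneLift_fac_right : coneLift x s ≫ legB x = s.snd := by
  ext m y

lemma coneLift_uniq (ℓ : s.pt ⟶ K x) (h1 : ℓ ≫ legA x = s.fst) :
    ℓ = coneLift x s := by
  ext m y
  have e := types_congr_hom (NatTrans.congr_app h1 m) y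
  have e0 : Fmk x (ℓ.app m y) = ((s.fst.app m y).obj 0).of := congrArg Core.of (Functor.congr_obj e 0)
  calc ℓ.app m y = extract x (Fmk x (ℓ.app m y)) (fun _ => rfl) := (extract_Fmk x _).symm
    _ = _ := extract_congr x e0 (fun _ => rfl)
      (fun i => (constancy x _ (cone_fiber x s m y)).1 0 i)

end

/-- The cone with point the constant simplicial set is a limit cone. -/
noncomputable def coneIsLimit :
    IsLimit (PullbackCone.mk (legA x) (legB x) (cone_condition x)) :=
  PullbackCone.IsLimit.mk (cone_condition x) (coneLift x)
    (coneLift_fac_left x) (coneLift_fac_right x)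
    (fun s ℓ h1 _ => coneLift_uniq x s ℓ h1)

end Stmt7Aux

/-- Let `C` be a small category, `n ≥ 1`, and `x₀, …, xₙ` objects of `C`.
Let `p : Core (ComposableArrows C n) ⥤ ∏_{i : Fin (n+1)} Core C` send a chain to its tuple of
objects.  The fiber of `nerve p` over the vertex `(x₀, …, xₙ)` — the pullback of `nerve p`
along the map `Δ[0] ⟶ nerve (∏_{i} Core C)` classifying the `0`-simplex `(x₀, …, xₙ)` — is
isomorphic to the constant (discrete) simplicial set on the set
`Hom(x₀,x₁) × Hom(x₁,x₂) × ⋯ × Hom(x_{n-1},xₙ)`. -/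
theorem stmt7 (C : Type) [SmallCategory C] (n : ℕ) (hn : 1 ≤ n) (x : Fin (n + 1) → C) :
    Nonempty
      (Limits.pullback (_root_.nerveMap (chainToObjects C n))
          (classifyingMap (nerve (Fin (n + 1) → Core C))
            (ComposableArrows.mk₀ (fun i => (Core.mk (x i) : Core C)))) ≅
        (Functor.const SimplexCategoryᵒᵖ).obj (∀ i : Fin n, (x i.castSucc ⟶ x i.succ))) :=
    ⟨Limits.IsLimit.conePointUniqueUpToIso
      (Limits.pullbackIsPullback _ _) (Stmt7Aux.coneIsLimit x)⟩
end

section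
/- Let C be a small category, n ≥ 1, and let x₀, …, xₙ be objects of C. The full subcategory of Core(ComposableArrows C n) on those chains y₀ → y₁ → ⋯ → yₙ with y_i isomorphic to x_i in C for every i is equivalent, as a category, to the action groupoid of the group Aut(x₀) × Aut(x₁) × ⋯ × Aut(xₙ) acting on the set Hom(x₀,x₁) × Hom(x₁,x₂) × ⋯ × Hom(x_{n-1},xₙ) by ((α₀,…,αₙ) · (f₀,…,f_{n-1}))_j = α_{j+1} ∘ f_j ∘ α_j⁻¹. -/
open CategoryTheory

/-- The action of the group `Aut(x₀) × Aut(x₁) × ⋯ × Aut(xₙ)` on the set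
`Hom(x₀,x₁) × Hom(x₁,x₂) × ⋯ × Hom(x_{n-1},xₙ)` by
`((α₀,…,αₙ) • (f₀,…,f_{n-1}))_j = α_{j+1} ∘ f_j ∘ α_j⁻¹`. -/
instance chainConjAction (C : Type) [SmallCategory C] (n : ℕ) (x : Fin (n + 1) → C) :
    MulAction (∀ i : Fin (n + 1), Aut (x i))
      (∀ j : Fin n, (x j.castSucc ⟶ x j.succ)) where
  smul α f := fun j => (α j.castSucc).inv ≫ f j ≫ (α j.succ).hom
  one_smul f := by
    funext j
    show (Iso.refl _).inv ≫ f j ≫ (Iso.refl _).hom = f j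
    simp
  mul_smul α β f := by
    funext j
    show ((α * β) _).inv ≫ f j ≫ ((α * β) _).hom =
      (α _).inv ≫ ((β _).inv ≫ f j ≫ (β _).hom) ≫ (α _).hom
    simp [Pi.mul_apply, Aut.Aut_mul_def]
    change ((α _).inv ≫ (β _).inv) ≫ f j ≫ ((β _).hom ≫ (α _).hom) = _
    simp only [Category.assoc]

namespace Stmt9Aux

variable {C : Type} [SmallCategory C] {n : ℕ} (x : Fin (n + 1) → C)

/-- The chain of composable arrows associated to an element of the product of hom sets. -/
noncomputable def chain (f : ∀ j : Fin n, (x j.castSucc ⟶ x j.succ)) :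
    ComposableArrows C n :=
  ComposableArrows.mkOfObjOfMapSucc x f

lemma chain_map_succ (f : ∀ j : Fin n, (x j.castSucc ⟶ x j.succ)) (i : ℕ) (hi : i < n) :
    (chain x f).map' i (i + 1) = f ⟨i, hi⟩ :=
  ComposableArrows.mkOfObjOfMapSucc_map_succ x f i hi

/-- Smul unfolding. -/
lemma smul_apply (α : ∀ i : Fin (n + 1), Aut (x i))
    (f : ∀ j : Fin n, (x j.castSucc ⟶ x j.succ)) (j : Fin n) :
    (α • f) j = (α j.castSucc).inv ≫ f j ≫ (α j.succ).hom := rfl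

abbrev P : Core (ComposableArrows C n) → Prop := fun F =>
  ∀ i : Fin (n + 1),
    Nonempty (((Core.inclusion (ComposableArrows C n)).obj F).obj i ≅ x i)

/-- The comparison functor. -/
noncomputable def Φ :
    ActionCategory (∀ i : Fin (n + 1), Aut (x i))
        (∀ j : Fin n, (x j.castSucc ⟶ x j.succ)) ⥤
      ObjectProperty.FullSubcategory (P x) where
  obj p := ⟨⟨chain x p.back⟩, fun i => ⟨Iso.refl _⟩⟩
  map {p q} φ := ObjectProperty.homMk ⟨ComposableArrows.isoMk (fun i => φ.val i) (fun i hi => by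
    rw [chain_map_succ x p.back i hi, chain_map_succ x q.back i hi]
    obtain ⟨a, ha⟩ := φ
    change ∀ i : Fin (n + 1), Aut (x i) at a
    change a • p.back = q.back at ha
    have h' := congrFun ha ⟨i, hi⟩
    rw [smul_apply] at h'
    dsimp only
    rw [← h']
    simp [Fin.castSucc_mk, Fin.succ_mk]
    exact (Iso.hom_inv_id_assoc _ _).symm)⟩
  map_id p := by
    apply ObjectProperty.hom_ext
    apply Core.hom_ext
    ext i
    rfl
  map_comp {p q r} φ ψ := by
    apply ObjectProperty.hom_ext
    apply Core.hom_ext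
    ext i
    rfl

instance : (Φ x).Faithful where
  map_injective {p q} φ ψ h := by
    apply Subtype.ext
    funext i
    apply Iso.ext
    have := congrArg (fun (e : (Φ x).obj p ⟶ (Φ x).obj q) => e.hom.iso.hom.app i) h
    exact this

instance : (Φ x).Full where
  map_surjective {p q} e := by
    let E : chain x p.back ≅ chain x q.back := e.hom.iso
    refine ⟨⟨fun i => show Aut (x i) from E.app i, ?_⟩, ?_⟩
    · show (fun i => show Aut (x i) from E.app i) • p.back = q.back
      funext j
      rw [smul_apply]
      have nat : (chain x p.back).map (homOfLE j.castSucc_le_succ) ≫ E.hom.app j.succ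
          = E.hom.app j.castSucc ≫ (chain x q.back).map (homOfLE j.castSucc_le_succ) :=
        E.hom.naturality _
      have hp : (chain x p.back).map (homOfLE j.castSucc_le_succ) = p.back j := by
        have := chain_map_succ x p.back j.val j.isLt
        convert this using 2
      have hq : (chain x q.back).map (homOfLE j.castSucc_le_succ) = q.back j := by
        have := chain_map_succ x q.back j.val j.isLt
        convert this using 2
      rw [hp, hq] at nat
      rw [Iso.app_inv, Iso.app_hom]
      exact (Iso.inv_comp_eq (E.app j.castSucc)).mpr nat
    · apply ObjectProperty.hom_ext
      apply Core.hom_ext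
      ext i
      rfl

instance : (Φ x).EssSurj where
  mem_essImage Y := by
    obtain ⟨⟨F⟩, hF⟩ := Y
    have e : ∀ i, F.obj i ≅ x i := fun i => (hF i).some
    set f : ∀ j : Fin n, (x j.castSucc ⟶ x j.succ) :=
      fun j => (e j.castSucc).inv ≫ F.map (homOfLE j.castSucc_le_succ) ≫ (e j.succ).hom with hf
    refine ⟨(ActionCategory.objEquiv _ _) f, ⟨?_⟩⟩
    have I : chain x f ≅ F := ComposableArrows.isoMk
      (fun i => (e i).symm) (fun i hi => by
        rw [chain_map_succ x f i hi]
        have hfi : f ⟨i, hi⟩ =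
            (e (⟨i, hi⟩ : Fin n).castSucc).inv ≫
              F.map (homOfLE (⟨i, hi⟩ : Fin n).castSucc_le_succ) ≫
              (e (⟨i, hi⟩ : Fin n).succ).hom := rfl
        rw [hfi]
        have : F.map (homOfLE (⟨i, hi⟩ : Fin n).castSucc_le_succ) = F.map' i (i + 1) := by
          congr 1
        rw [this]
        simp [Fin.castSucc_mk, Fin.succ_mk]
        show ((e _).inv ≫ F.map _ ≫ (e _).hom) ≫ (e _).inv = (e _).inv ≫ F.map _
        simp only [Category.assoc, Iso.hom_inv_id, Category.comp_id])
    refine ⟨ObjectProperty.homMk ⟨I⟩, ObjectProperty.homMk ⟨I.symm⟩, ?_, ?_⟩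
    · apply ObjectProperty.hom_ext
      apply Core.hom_ext
      exact I.hom_inv_id
    · apply ObjectProperty.hom_ext
      apply Core.hom_ext
      exact I.inv_hom_id

noncomputable def equiv :
    ObjectProperty.FullSubcategory (P x) ≌
      ActionCategory (∀ i : Fin (n + 1), Aut (x i))
        (∀ j : Fin n, (x j.castSucc ⟶ x j.succ)) := by
  have : (Φ x).IsEquivalence := {}
  exact (Φ x).asEquivalence.symm

end Stmt9Aux

/-- Let `C` be a small category, `n ≥ 1`, and `x₀, …, xₙ` objects of `C`.
The full subcategory of `Core (ComposableArrows C n)` on the chains `y₀ → ⋯ → yₙ` with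
`yᵢ ≅ xᵢ` in `C` for every `i` is equivalent to the action groupoid of
`Aut(x₀) × ⋯ × Aut(xₙ)` acting on `Hom(x₀,x₁) × ⋯ × Hom(x_{n-1},xₙ)` by
`((α₀,…,αₙ) • (f₀,…,f_{n-1}))_j = α_{j+1} ∘ f_j ∘ α_j⁻¹`. -/
theorem stmt9 (C : Type) [SmallCategory C] (n : ℕ) (hn : 1 ≤ n) (x : Fin (n + 1) → C) :
    Nonempty
      ((ObjectProperty.FullSubcategory (fun F : Core (ComposableArrows C n) =>
          ∀ i : Fin (n + 1),
            Nonempty (((Core.inclusion (ComposableArrows C n)).obj F).obj i ≅ x i))) ≌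
        ActionCategory (∀ i : Fin (n + 1), Aut (x i))
          (∀ j : Fin n, (x j.castSucc ⟶ x j.succ))) :=
  ⟨Stmt9Aux.equiv x⟩
end
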